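/- Let F be a 3-uniform hypergraph and F(2) its 2-blow-up. If for some ε > 0 and all sufficiently large n every 3-uniform hypergraph on n vertices with minimum codegree at least εn contains at least δn^{v(F)} copies of F (for some fixed δ > 0), then for all sufficiently large n every 3-uniform hypergraph on n vertices with minimum codegree at least 2εn contains a copy of F(2). -/

import Mathlib

open Finset

section Box

variable {k : ℕ} {V : Type} [Fintype V] [DecidableEq V]

private def Dsl (A : Finset (Fin (k+1) → V)) (h : Fin k → V) : Finset V :=
  Finset.univ.filter fun v => Fin.snoc h v ∈ A

private def Bsl (A : Finset (Fin (k+1) → V)) (p : V × V) : Finset (Fin k → V) :=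
  Finset.univ.filter fun h => Fin.snoc h p.1 ∈ A ∧ Fin.snoc h p.2 ∈ A

private lemma mem_Dsl {A : Finset (Fin (k+1) → V)} {h : Fin k → V} {v : V} :
    v ∈ Dsl A h ↔ Fin.snoc h v ∈ A := by
  unfold Dsl; simp

private lemma mem_Bsl {A : Finset (Fin (k+1) → V)} {p : V × V} {h : Fin k → V} :
    h ∈ Bsl A p ↔ Fin.snoc h p.1 ∈ A ∧ Fin.snoc h p.2 ∈ A := by
  unfold Bsl; simp

private lemma sum_Dsl (A : Finset (Fin (k+1) → V)) :
    ∑ h : Fin k → V, (Dsl A h).card = A.card := by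
  classical
  rw [Finset.card_eq_sum_card_fiberwise (f := fun a => Fin.init a)
    (t := Finset.univ) (fun x _ => Finset.mem_univ _)]
  refine Finset.sum_congr rfl fun h _ => ?_
  refine Finset.card_bij (fun v (_ : v ∈ Dsl A h) => (Fin.snoc h v : Fin (k+1) → V)) ?_ ?_ ?_
  · intro v hv
    rw [mem_Dsl] at hv
    rw [Finset.mem_filter]
    exact ⟨hv, by simp⟩
  · intro v1 h1 v2 h2 he
    have := congrFun he (Fin.last k)
    simpa using this
  · intro a ha
    rw [Finset.mem_filter] at ha
    obtain ⟨ha1, ha2⟩ := ha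
    subst ha2
    exact ⟨a (Fin.last k), by rw [mem_Dsl]; simpa [Fin.snoc_init_self] using ha1,
      Fin.snoc_init_self a⟩

private lemma sum_Bsl (A : Finset (Fin (k+1) → V)) :
    ∑ p : V × V, (Bsl A p).card = ∑ h : Fin k → V, (Dsl A h).card ^ 2 := by
  classical
  have h0 : ∀ p : V × V, (Bsl A p).card
      = ∑ h : Fin k → V, (if Fin.snoc h p.1 ∈ A ∧ Fin.snoc h p.2 ∈ A then 1 else 0) :=
    fun p => Finset.card_filter _ _
  rw [Finset.sum_congr rfl (fun p _ => h0 p), Finset.sum_comm]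
  refine Finset.sum_congr rfl fun h _ => ?_
  have h1 : (Finset.univ.filter (fun p : V × V => Fin.snoc h p.1 ∈ A ∧ Fin.snoc h p.2 ∈ A))
      = Dsl A h ×ˢ Dsl A h := by
    ext p
    simp [mem_Dsl, Finset.mem_product]
  calc ∑ p : V × V, (if Fin.snoc h p.1 ∈ A ∧ Fin.snoc h p.2 ∈ A then 1 else 0)
      = (Finset.univ.filter (fun p : V × V => Fin.snoc h p.1 ∈ A ∧ Fin.snoc h p.2 ∈ A)).card :=
        (Finset.card_filter _ _).symm
    _ = (Dsl A h ×ˢ Dsl A h).card := by rw [h1]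
    _ = (Dsl A h).card ^ 2 := by rw [Finset.card_product, sq]

end Box

private lemma box_lemma : ∀ (k : ℕ) (δ : ℝ), 0 < δ → ∃ N : ℕ,
    ∀ (V : Type) [Fintype V] [DecidableEq V] (A : Finset (Fin k → V)),
      N ≤ Fintype.card V → δ * (Fintype.card V : ℝ) ^ k ≤ (A.card : ℝ) →
      ∃ S : Fin k → V × V, (∀ i, (S i).1 ≠ (S i).2) ∧
        ∀ f : Fin k → Fin 2, (fun i => if f i = 0 then (S i).1 else (S i).2) ∈ A := by
  intro k
  induction k with
  | zero =>
    intro δ hδ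
    refine ⟨1, ?_⟩
    intro V _ _ A _ hA
    have hA0 : (0:ℝ) < (A.card : ℝ) := lt_of_lt_of_le (by simpa using hδ) (by simpa using hA)
    have hne : A.Nonempty := Finset.card_pos.mp (by exact_mod_cast hA0)
    obtain ⟨a, ha⟩ := hne
    refine ⟨fun i => i.elim0, fun i => i.elim0, fun f => ?_⟩
    have h : (fun i : Fin 0 => if f i = 0 then ((fun i : Fin 0 => i.elim0) i : V × V).1
        else ((fun i : Fin 0 => i.elim0) i : V × V).2) = a := funext fun i => i.elim0
    rw [h]; exact ha
  | succ k IH =>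
    intro δ hδ
    have hδ2 : 0 < δ^2/2 := by positivity
    obtain ⟨N0, hN0⟩ := IH (δ^2/2) hδ2
    refine ⟨max (max N0 1) ⌈2/δ^2⌉₊, ?_⟩
    intro V _ _ A hn hA
    classical
    set n := Fintype.card V with hn_def
    have hn1 : 1 ≤ n := le_trans (le_trans (le_max_right _ _) (le_max_left _ _)) hn
    have hnN0 : N0 ≤ n := le_trans (le_trans (le_max_left _ _) (le_max_left _ _)) hn
    have hn2 : 2/δ^2 ≤ (n:ℝ) := by
      refine le_trans (Nat.le_ceil _) ?_
      exact_mod_cast le_trans (le_max_right _ _) hn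
    have hnR : (1:ℝ) ≤ (n:ℝ) := by exact_mod_cast hn1
    have hnpos : (0:ℝ) < (n:ℝ) := lt_of_lt_of_le one_pos hnR
    have hnkpos : (0:ℝ) < (n:ℝ)^k := pow_pos hnpos k
    -- total sum of slice degrees
    have hsumD : (∑ h : Fin k → V, ((Dsl A h).card : ℝ)) = (A.card : ℝ) := by
      rw [← Nat.cast_sum]
      exact_mod_cast congrArg (Nat.cast (R := ℝ)) (sum_Dsl A)
    have hcardfun : (Fintype.card (Fin k → V)) = n ^ k := by
      simp [Fintype.card_fun, hn_def]
    -- Cauchy-Schwarz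
    have hCS : ((A.card : ℝ))^2 ≤ (n:ℝ)^k * ∑ h : Fin k → V, ((Dsl A h).card : ℝ)^2 := by
      have := sq_sum_le_card_mul_sum_sq (s := (Finset.univ : Finset (Fin k → V)))
        (f := fun h => ((Dsl A h).card : ℝ))
      rw [hsumD] at this
      calc ((A.card : ℝ))^2 ≤ (Finset.univ.card : ℝ) * ∑ h : Fin k → V, ((Dsl A h).card : ℝ)^2 := this
        _ = (n:ℝ)^k * ∑ h : Fin k → V, ((Dsl A h).card : ℝ)^2 := by
            rw [Finset.card_univ, hcardfun]; push_cast; ring_nf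
    have hAnn : (0:ℝ) ≤ δ * (n:ℝ)^(k+1) := by positivity
    have hsq : (δ * (n:ℝ)^(k+1))^2 ≤ ((A.card : ℝ))^2 := by
      apply pow_le_pow_left₀ hAnn hA
    have hsum2 : δ^2 * (n:ℝ)^(k+2) ≤ ∑ h : Fin k → V, ((Dsl A h).card : ℝ)^2 := by
      have h1 : (n:ℝ)^k * (δ^2 * (n:ℝ)^(k+2)) = (δ * (n:ℝ)^(k+1))^2 := by ring
      have h2 : (n:ℝ)^k * (δ^2 * (n:ℝ)^(k+2)) ≤ (n:ℝ)^k * ∑ h : Fin k → V, ((Dsl A h).card : ℝ)^2 := by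
        rw [h1]; exact le_trans hsq hCS
      exact le_of_mul_le_mul_left h2 hnkpos
    -- sum over all pairs
    have hsumB : (∑ p : V × V, ((Bsl A p).card : ℝ)) = ∑ h : Fin k → V, ((Dsl A h).card : ℝ)^2 := by
      rw [← Nat.cast_sum]
      push_cast [sum_Bsl A]
      norm_num
    -- diagonal bound
    have hBle : ∀ p : V × V, ((Bsl A p).card : ℝ) ≤ (n:ℝ)^k := by
      intro p
      have : (Bsl A p).card ≤ Fintype.card (Fin k → V) := by
        rw [← Finset.card_univ]; exact Finset.card_filter_le _ _
      rw [hcardfun] at this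
      exact_mod_cast this
    have hdiagcard : (Finset.univ.filter (fun p : V × V => p.1 = p.2)).card ≤ n := by
      have : (Finset.univ.filter (fun p : V × V => p.1 = p.2)).card ≤ (Finset.univ : Finset V).card := by
        refine Finset.card_le_card_of_injOn (fun p => p.1) (fun p _ => Finset.mem_univ _) ?_
        intro p hp q hq hpq
        simp only [Finset.coe_filter, Set.mem_setOf_eq] at hp hq
        dsimp only at hpq
        exact Prod.ext hpq (by rw [← hp.2, ← hq.2, hpq])
      simpa using this
    have hdiag : ∑ p ∈ Finset.univ.filter (fun p : V × V => p.1 = p.2), ((Bsl A p).card : ℝ)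
        ≤ (n:ℝ)^(k+1) := by
      calc ∑ p ∈ Finset.univ.filter (fun p : V × V => p.1 = p.2), ((Bsl A p).card : ℝ)
          ≤ ∑ _p ∈ Finset.univ.filter (fun p : V × V => p.1 = p.2), (n:ℝ)^k :=
            Finset.sum_le_sum (fun p _ => hBle p)
        _ = ((Finset.univ.filter (fun p : V × V => p.1 = p.2)).card : ℝ) * (n:ℝ)^k := by
            rw [Finset.sum_const, nsmul_eq_mul]
        _ ≤ (n:ℝ) * (n:ℝ)^k := by
            apply mul_le_mul_of_nonneg_right _ (le_of_lt hnkpos)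
            exact_mod_cast hdiagcard
        _ = (n:ℝ)^(k+1) := by ring
    have hsplit : ∑ p ∈ Finset.univ.filter (fun p : V × V => p.1 = p.2), ((Bsl A p).card : ℝ)
        + ∑ p ∈ Finset.univ.filter (fun p : V × V => ¬ p.1 = p.2), ((Bsl A p).card : ℝ)
        = ∑ p : V × V, ((Bsl A p).card : ℝ) :=
      Finset.sum_filter_add_sum_filter_not _ _ _
    have hhalf : (n:ℝ)^(k+1) ≤ (δ^2/2) * (n:ℝ)^(k+2) := by
      have h1 : (1:ℝ) ≤ δ^2/2 * (n:ℝ) := by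
        have h2 : (2/δ^2) * (δ^2/2) = 1 := by field_simp
        nlinarith [mul_le_mul_of_nonneg_right hn2 (le_of_lt hδ2)]
      calc (n:ℝ)^(k+1) = 1 * (n:ℝ)^(k+1) := by ring
        _ ≤ (δ^2/2 * (n:ℝ)) * (n:ℝ)^(k+1) :=
            mul_le_mul_of_nonneg_right h1 (by positivity)
        _ = (δ^2/2) * (n:ℝ)^(k+2) := by ring
    have hoff : (δ^2/2) * (n:ℝ)^(k+2)
        ≤ ∑ p ∈ Finset.univ.filter (fun p : V × V => ¬ p.1 = p.2), ((Bsl A p).card : ℝ) := by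
      have h1 : δ^2 * (n:ℝ)^(k+2) ≤ ∑ p : V × V, ((Bsl A p).card : ℝ) := by
        rw [hsumB]; exact hsum2
      have h2 : δ^2 * (n:ℝ)^(k+2) - (n:ℝ)^(k+1)
          ≤ ∑ p ∈ Finset.univ.filter (fun p : V × V => ¬ p.1 = p.2), ((Bsl A p).card : ℝ) := by
        linarith [hsplit, hdiag, h1]
      linarith [hhalf]
    -- find a good off-diagonal pair
    have hex : ∃ p ∈ Finset.univ.filter (fun p : V × V => ¬ p.1 = p.2),
        (δ^2/2) * (n:ℝ)^k ≤ ((Bsl A p).card : ℝ) := by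
      by_contra hcon
      push_neg at hcon
      rcases (Finset.univ.filter (fun p : V × V => ¬ p.1 = p.2)).eq_empty_or_nonempty with he | hne
      · rw [he, Finset.sum_empty] at hoff
        nlinarith [pow_pos hnpos (k+2), hδ2]
      · have hlt := Finset.sum_lt_sum_of_nonempty hne (fun p hp => hcon p hp)
        rw [Finset.sum_const, nsmul_eq_mul] at hlt
        have hc2 : ((Finset.univ.filter (fun p : V × V => ¬ p.1 = p.2)).card : ℝ) ≤ (n:ℝ)^2 := by
          have : (Finset.univ.filter (fun p : V × V => ¬ p.1 = p.2)).card
              ≤ Fintype.card (V × V) := by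
            rw [← Finset.card_univ]; exact Finset.card_filter_le _ _
          have h3 : Fintype.card (V × V) = n * n := by simp [Fintype.card_prod, hn_def]
          rw [h3] at this
          calc ((Finset.univ.filter (fun p : V × V => ¬ p.1 = p.2)).card : ℝ)
              ≤ ((n * n : ℕ) : ℝ) := by exact_mod_cast this
            _ = (n:ℝ)^2 := by push_cast; ring
        have : ∑ p ∈ Finset.univ.filter (fun p : V × V => ¬ p.1 = p.2), ((Bsl A p).card : ℝ)
            < (δ^2/2) * (n:ℝ)^(k+2) := by
          calc ∑ p ∈ Finset.univ.filter (fun p : V × V => ¬ p.1 = p.2), ((Bsl A p).card : ℝ)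
              < ((Finset.univ.filter (fun p : V × V => ¬ p.1 = p.2)).card : ℝ)
                * ((δ^2/2) * (n:ℝ)^k) := hlt
            _ ≤ (n:ℝ)^2 * ((δ^2/2) * (n:ℝ)^k) :=
                mul_le_mul_of_nonneg_right hc2 (by positivity)
            _ = (δ^2/2) * (n:ℝ)^(k+2) := by ring
        linarith [hoff]
    obtain ⟨p, hpmem, hpB⟩ := hex
    have hp12 : p.1 ≠ p.2 := (Finset.mem_filter.mp hpmem).2
    obtain ⟨S', hS'd, hS'tv⟩ := hN0 V (Bsl A p) hnN0 (by rw [← hn_def]; exact hpB)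
    refine ⟨Fin.snoc S' p, ?_, ?_⟩
    · intro i
      refine Fin.lastCases ?_ ?_ i
      · simpa [Fin.snoc_last] using hp12
      · intro j
        simpa [Fin.snoc_castSucc] using hS'd j
    · intro f
      have hT' := hS'tv (Fin.init f)
      have key : (fun i : Fin (k+1) => if f i = 0 then ((Fin.snoc S' p : Fin (k+1) → V × V) i).1
              else ((Fin.snoc S' p : Fin (k+1) → V × V) i).2)
          = (Fin.snoc (fun j => if Fin.init f j = 0 then (S' j).1 else (S' j).2)
              (if f (Fin.last k) = 0 then p.1 else p.2) : Fin (k+1) → V) := by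
        funext i
        refine Fin.lastCases ?_ ?_ i
        · simp [Fin.snoc_last]
        · intro j
          simp [Fin.snoc_castSucc, Fin.init]
          exact if_congr Iff.rfl rfl rfl
      rw [key]
      rw [mem_Bsl] at hT'
      obtain ⟨h1, h2⟩ := hT'
      by_cases hf : f (Fin.last k) = 0
      · simpa [hf] using h1
      · simpa [hf] using h2

/-- (Supersaturation to blow-up transference.)  Let `F` be a 3-uniform
hypergraph on vertex set `W` with edge set `EF`.  Suppose that for some `ε, δ > 0` and all
sufficiently large `n`, every 3-uniform hypergraph on `n` vertices with minimum codegree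
at least `εn` contains at least `δ·n^{v(F)}` copies of `F` (injective edge-preserving
maps).  Then for all sufficiently large `n`, every 3-uniform hypergraph on `n` vertices
with minimum codegree at least `2εn` contains a copy of the 2-blow-up `F(2)`. -/
theorem supersaturation_to_blowup (W : Type) [Fintype W] [DecidableEq W]
    (EF : Finset (Finset W)) (h3 : ∀ e ∈ EF, e.card = 3)
    (ε δ : ℝ) (hε : 0 < ε) (hδ : 0 < δ)
    (hsat : ∃ N : ℕ, ∀ (V : Type) [Fintype V] [DecidableEq V] (E : Finset (Finset V)),
      (∀ e ∈ E, e.card = 3) → N ≤ Fintype.card V →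
      (∀ u v : V, u ≠ v →
        ε * (Fintype.card V : ℝ) ≤ ((E.filter fun e => u ∈ e ∧ v ∈ e).card : ℝ)) →
      δ * (Fintype.card V : ℝ) ^ (Fintype.card W) ≤
        (Nat.card {g : W → V // Function.Injective g ∧ ∀ e ∈ EF, e.image g ∈ E} : ℝ)) :
    ∃ N' : ℕ, ∀ (V : Type) [Fintype V] [DecidableEq V] (E : Finset (Finset V)),
      (∀ e ∈ E, e.card = 3) → N' ≤ Fintype.card V →
      (∀ u v : V, u ≠ v →
        2 * ε * (Fintype.card V : ℝ) ≤ ((E.filter fun e => u ∈ e ∧ v ∈ e).card : ℝ)) →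
      ∃ g : W × Fin 2 → V, Function.Injective g ∧
        ∀ x y z : W × Fin 2, x.1 ≠ y.1 → x.1 ≠ z.1 → y.1 ≠ z.1 →
          ({x.1, y.1, z.1} : Finset W) ∈ EF → ({g x, g y, g z} : Finset V) ∈ E := by
  classical
  obtain ⟨N, hN⟩ := hsat
  obtain ⟨N0, hbox⟩ := box_lemma (Fintype.card W) δ hδ
  refine ⟨max N N0, ?_⟩
  intro V _ _ E hE3 hn hcodeg
  have hnN : N ≤ Fintype.card V := le_trans (le_max_left _ _) hn
  have hnN0 : N0 ≤ Fintype.card V := le_trans (le_max_right _ _) hn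
  have hcod : ∀ u v : V, u ≠ v →
      ε * (Fintype.card V : ℝ) ≤ ((E.filter fun e => u ∈ e ∧ v ∈ e).card : ℝ) := by
    intro u v huv
    refine le_trans ?_ (hcodeg u v huv)
    nlinarith [Nat.cast_nonneg (α := ℝ) (Fintype.card V), hε]
  have hmany := hN V E hE3 hnN hcod
  set P : (W → V) → Prop := fun g => Function.Injective g ∧ ∀ e ∈ EF, e.image g ∈ E with hP
  set C : Finset (W → V) := Finset.univ.filter P with hC
  have hcard : (Nat.card {g : W → V // P g}) = C.card := by
    rw [Nat.card_eq_fintype_card, hC]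
    convert Fintype.card_subtype P using 2
  set eW := Fintype.equivFin W with heW
  set A : Finset (Fin (Fintype.card W) → V) := C.image (fun G => G ∘ eW.symm) with hA
  have hAC : A.card = C.card := by
    rw [hA]
    apply Finset.card_image_of_injective
    intro G1 G2 hG
    funext a
    have := congrFun hG (eW a)
    simpa using this
  have hAbig : δ * (Fintype.card V : ℝ) ^ (Fintype.card W) ≤ (A.card : ℝ) := by
    rw [hAC, ← hcard]
    exact hmany
  obtain ⟨S, hSd, hStv⟩ := hbox V A hnN0 hAbig
  have hcopy : ∀ f : Fin (Fintype.card W) → Fin 2, ∃ G : W → V, P G ∧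
      ∀ a : W, G a = if f (eW a) = 0 then (S (eW a)).1 else (S (eW a)).2 := by
    intro f
    have hmem := hStv f
    rw [hA] at hmem
    rcases Finset.mem_image.mp hmem with ⟨G, hG, hGe⟩
    refine ⟨G, (Finset.mem_filter.mp (hC ▸ hG)).2, fun a => ?_⟩
    have := congrFun hGe (eW a)
    simpa using this
  set g : W × Fin 2 → V := fun x => if x.2 = 0 then (S (eW x.1)).1 else (S (eW x.1)).2 with hg
  have fin2 : ∀ j : Fin 2, j = 0 ∨ j = 1 := by decide
  have gdiff : ∀ x y : W × Fin 2, x.1 ≠ y.1 → g x ≠ g y := by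
    intro x y hne
    obtain ⟨G, ⟨hGinj, -⟩, hGval⟩ := hcopy
      (fun i => if i = eW x.1 then x.2 else if i = eW y.1 then y.2 else 0)
    have hexy : eW y.1 ≠ eW x.1 := fun h => hne (eW.injective h).symm
    have hex : G x.1 = g x := by
      rw [hGval x.1, hg]
      simp
    have hey : G y.1 = g y := by
      rw [hGval y.1, hg]
      simp [hexy]
    intro hgg
    exact hne (hGinj (by rw [hex, hey, hgg]))
  refine ⟨g, ?_, ?_⟩
  · intro x y hxy
    by_cases h1 : x.1 = y.1
    · refine Prod.ext h1 ?_
      rcases fin2 x.2 with h2 | h2 <;> rcases fin2 y.2 with h3 | h3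
      · rw [h2, h3]
      · exfalso
        rw [hg] at hxy
        simp only [h2, h3, h1] at hxy
        norm_num at hxy
        exact hSd (eW y.1) hxy
      · exfalso
        rw [hg] at hxy
        simp only [h2, h3, h1] at hxy
        norm_num at hxy
        exact hSd (eW y.1) hxy.symm
      · rw [h2, h3]
    · exact absurd hxy (gdiff x y h1)
  · intro x y z hxy hxz hyz hEF
    obtain ⟨G, ⟨-, hGedge⟩, hGval⟩ := hcopy
      (fun i => if i = eW x.1 then x.2 else if i = eW y.1 then y.2 else
        if i = eW z.1 then z.2 else 0)
    have hyx : eW y.1 ≠ eW x.1 := fun h => hxy (eW.injective h).symm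
    have hzx : eW z.1 ≠ eW x.1 := fun h => hxz (eW.injective h).symm
    have hzy : eW z.1 ≠ eW y.1 := fun h => hyz (eW.injective h).symm
    have hx : G x.1 = g x := by rw [hGval x.1, hg]; simp
    have hy : G y.1 = g y := by rw [hGval y.1, hg]; simp [hyx]
    have hz : G z.1 = g z := by rw [hGval z.1, hg]; simp [hzx, hzy]
    have hmem := hGedge _ hEF
    have himg : ({x.1, y.1, z.1} : Finset W).image G = {g x, g y, g z} := by
      simp [Finset.image_insert, Finset.image_singleton, hx, hy, hz]
    rwa [himg] at hmem
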